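/- Suppose a six-party strategy outputs bits y_j and for each input x ∈ {0,1}^6 the joint outcome satisfies the cubic Boolean function win condition Σ_{j∈supp(s)} y_j = Σ_j x_{j−1}x_j x_{j+1} mod 2 with probability p_x, where the quantum strategy measures the stabilizer S_x of |C_6⟩ on state ρ. Then the average success probability Pr_Q[win] = (1/64) Σ_{x∈{0,1}^6} (1 + tr(ρ S_x))/2, and hence F(ρ,|C_6⟩) = 2·Pr_Q[win] − 1. -/

import Mathlib

open Matrix
open scoped ComplexOrder

/-- Pauli `X` acting on qubit `v`. -/
noncomputable def Xop {V : Type*} [Fintype V] [DecidableEq V] (v : V) :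
    Matrix (V → ZMod 2) (V → ZMod 2) ℂ :=
  Matrix.of fun s t => if s = Function.update t v (t v + 1) then 1 else 0

/-- Pauli `Z` acting on qubit `v`. -/
noncomputable def Zop {V : Type*} [Fintype V] [DecidableEq V] (v : V) :
    Matrix (V → ZMod 2) (V → ZMod 2) ℂ :=
  Matrix.diagonal fun t => (-1 : ℂ) ^ (t v).val

/-- The six-qubit cyclic cluster state `|C₆⟩`: the product of the diagonal `CZ` gates
over the edges `{j, j+1}` of the cycle `C₆` applied to `|+⟩^{⊗6}`. -/
noncomputable def C6vec : (ZMod 6 → ZMod 2) → ℂ :=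
  fun t => (∏ j : ZMod 6, (-1 : ℂ) ^ ((t j).val * (t (j + 1)).val)) *
    ((Real.sqrt 2 : ℂ))⁻¹ ^ 6

/-- Stabilizer generators of `|C₆⟩`: `S_j = Z_{j-1} X_j Z_{j+1}`. -/
noncomputable def Sgen (j : ZMod 6) :
    Matrix (ZMod 6 → ZMod 2) (ZMod 6 → ZMod 2) ℂ :=
  Zop (j - 1) * Xop j * Zop (j + 1)

/-- The stabilizer `S_x = ∏_{j=0}^{5} S_j^{x_j}`. -/
noncomputable def Sx (x : ZMod 6 → ZMod 2) :
    Matrix (ZMod 6 → ZMod 2) (ZMod 6 → ZMod 2) ℂ :=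
  ((List.range 6).map fun j => Sgen (j : ZMod 6) ^ (x (j : ZMod 6)).val).prod

def dotN (b t : ZMod 6 → ZMod 2) : ℕ := ∑ j : ZMod 6, ((b j) * (t j)).val

noncomputable def PP (a b : ZMod 6 → ZMod 2) (n : ℕ) :
    Matrix (ZMod 6 → ZMod 2) (ZMod 6 → ZMod 2) ℂ :=
  Matrix.of fun s t => if s = t + a then (-1 : ℂ) ^ (n + dotN b t) else 0

lemma neg_one_pow_congr_mod2 {m n : ℕ} (h : m % 2 = n % 2) : (-1 : ℂ) ^ m = (-1 : ℂ) ^ n := by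
  conv_lhs => rw [← Nat.div_add_mod m 2]
  conv_rhs => rw [← Nat.div_add_mod n 2]
  rw [pow_add, pow_add, pow_mul, pow_mul, h]
  norm_num

lemma sum_mod_congr {f g : ZMod 6 → ℕ} (h : ∀ j, f j % 2 = g j % 2) :
    (∑ j : ZMod 6, f j) % 2 = (∑ j : ZMod 6, g j) % 2 := by
  rw [Finset.sum_nat_mod, Finset.sum_congr rfl (fun j _ => h j), ← Finset.sum_nat_mod]

lemma dotN_add_right (b t a : ZMod 6 → ZMod 2) :
    dotN b (t + a) % 2 = (dotN b t + dotN b a) % 2 := by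
  unfold dotN
  rw [← Finset.sum_add_distrib]
  refine sum_mod_congr fun j => ?_
  have : ∀ u v w : ZMod 2, (u * (v + w)).val % 2 = ((u * v).val + (u * w).val) % 2 := by decide
  exact this (b j) (t j) (a j)

lemma dotN_add_left (b b' t : ZMod 6 → ZMod 2) :
    dotN (b + b') t % 2 = (dotN b t + dotN b' t) % 2 := by
  unfold dotN
  rw [← Finset.sum_add_distrib]
  refine sum_mod_congr fun j => ?_
  have : ∀ u v w : ZMod 2, ((u + v) * w).val % 2 = ((u * w).val + (v * w).val) % 2 := by decide
  exact this (b j) (b' j) (t j)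

lemma PP_mul (a b a' b' : ZMod 6 → ZMod 2) (n n' : ℕ) :
    PP a b n * PP a' b' n' = PP (a + a') (b + b') (n + n' + dotN b a') := by
  ext s t
  rw [Matrix.mul_apply]
  rw [Finset.sum_eq_single (t + a')]
  · simp only [PP, Matrix.of_apply, eq_self_iff_true, if_true]
    have hadd : t + a' + a = t + (a + a') := by abel
    by_cases h : s = t + (a + a')
    · rw [if_pos (by rw [h, hadd]), if_pos h, ← pow_add]
      refine neg_one_pow_congr_mod2 ?_
      have h1 := dotN_add_right b t a'
      have h2 := dotN_add_left b b' t
      omega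
    · rw [if_neg (by rw [hadd]; exact h), if_neg h, zero_mul]
  · intro u _ hu
    simp only [PP, Matrix.of_apply]
    rw [if_neg (fun hh => hu hh), mul_zero]
  · intro h; exact absurd (Finset.mem_univ _) h

lemma dotN_eB (j : ZMod 6) (t : ZMod 6 → ZMod 2) :
    dotN (fun i => if i = j - 1 ∨ i = j + 1 then 1 else 0) t
      = (t (j - 1)).val + (t (j + 1)).val := by
  have hne : j - 1 ≠ j + 1 := by
    intro h
    have : (2 : ZMod 6) = 0 := by
      have := congrArg (fun z => z - j + 1 + 1) h
      simpa [sub_eq_iff_eq_add, one_add_one_eq_two] using this.symm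
    exact absurd this (by decide)
  unfold dotN
  have hterm : ∀ i : ZMod 6,
      (((if i = j - 1 ∨ i = j + 1 then 1 else 0) : ZMod 2) * t i).val
        = (if i = j - 1 then (t i).val else 0) + (if i = j + 1 then (t i).val else 0) := by
    intro i
    by_cases h1 : i = j - 1
    · subst h1
      rw [if_pos (Or.inl rfl), if_pos rfl, if_neg hne, one_mul, add_zero]
    · by_cases h2 : i = j + 1
      · subst h2
        rw [if_pos (Or.inr rfl), if_neg h1, if_pos rfl, one_mul, zero_add]
      · rw [if_neg (by tauto), if_neg h1, if_neg h2, zero_mul]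
        rfl
  rw [Finset.sum_congr rfl (fun i _ => hterm i), Finset.sum_add_distrib,
    Finset.sum_ite_eq' Finset.univ (j - 1) (fun i => (t i).val),
    Finset.sum_ite_eq' Finset.univ (j + 1) (fun i => (t i).val)]
  simp

lemma Sgen_eq (j : ZMod 6) :
    Sgen j = PP (fun i => if i = j then 1 else 0)
      (fun i => if i = j - 1 ∨ i = j + 1 then 1 else 0) 0 := by
  have hj1 : j - 1 ≠ j := fun h => absurd (sub_eq_self.mp h) (by decide)
  ext s t
  rw [Sgen]
  simp only [Zop]
  rw [Matrix.mul_diagonal, Matrix.diagonal_mul]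
  have hupd : Function.update t j (t j + 1) = t + fun i => if i = j then 1 else 0 := by
    funext i
    by_cases h : i = j
    · subst h; simp
    · simp [Function.update_of_ne h, h]
  rw [Xop]
  simp only [Matrix.of_apply, hupd]
  by_cases h : s = t + fun i => if i = j then 1 else 0
  · rw [if_pos h, PP, Matrix.of_apply, if_pos h]
    have hs : s (j - 1) = t (j - 1) := by
      rw [h]; simp [hj1]
    rw [hs, dotN_eB, mul_one, zero_add, ← pow_add]
  · rw [if_neg h, PP, Matrix.of_apply, if_neg h, mul_zero, zero_mul]

lemma PP_one : PP 0 0 0 = 1 := by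
  ext s t
  rw [PP, Matrix.of_apply, Matrix.one_apply]
  have : dotN 0 t = 0 := by
    unfold dotN; simp
  rw [this, add_zero, add_zero, pow_zero]

lemma Sgen_pow (c : ZMod 2) (j : ZMod 6) :
    Sgen j ^ c.val = PP (fun i => if i = j then c else 0)
      (fun i => if i = j - 1 ∨ i = j + 1 then c else 0) 0 := by
  have hall : ∀ d : ZMod 2, d = 0 ∨ d = 1 := by decide
  have hc := hall c
  rcases hc with hc | hc <;> subst hc
  · show Sgen j ^ 0 = _
    rw [pow_zero, ← PP_one]
    congr 1 <;> funext i <;> simp <;> rfl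
  · show Sgen j ^ 1 = _
    rw [pow_one, Sgen_eq]

def Af (x : ZMod 6 → ZMod 2) : ZMod 6 → ZMod 2 :=
  (fun i => if i = 0 then x 0 else 0) +
    ((fun i => if i = 1 then x 1 else 0) +
      ((fun i => if i = 2 then x 2 else 0) +
        ((fun i => if i = 3 then x 3 else 0) +
          ((fun i => if i = 4 then x 4 else 0) + ((fun i => if i = 5 then x 5 else 0) + 0)))))

def Bf (x : ZMod 6 → ZMod 2) : ZMod 6 → ZMod 2 :=
  (fun i => if i = 0 - 1 ∨ i = 0 + 1 then x 0 else 0) +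
    ((fun i => if i = 1 - 1 ∨ i = 1 + 1 then x 1 else 0) +
      ((fun i => if i = 2 - 1 ∨ i = 2 + 1 then x 2 else 0) +
        ((fun i => if i = 3 - 1 ∨ i = 3 + 1 then x 3 else 0) +
          ((fun i => if i = 4 - 1 ∨ i = 4 + 1 then x 4 else 0) +
            ((fun i => if i = 5 - 1 ∨ i = 5 + 1 then x 5 else 0) + 0)))))

def Nf (x : ZMod 6 → ZMod 2) : ℕ :=
  0 +
      (0 +
          (0 +
              (0 +
                  (0 + (0 + 0 + dotN (fun i => if i = 5 - 1 ∨ i = 5 + 1 then x 5 else 0) 0) +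
                    dotN (fun i => if i = 4 - 1 ∨ i = 4 + 1 then x 4 else 0)
                      ((fun i => if i = 5 then x 5 else 0) + 0)) +
                dotN (fun i => if i = 3 - 1 ∨ i = 3 + 1 then x 3 else 0)
                  ((fun i => if i = 4 then x 4 else 0) + ((fun i => if i = 5 then x 5 else 0) + 0))) +
            dotN (fun i => if i = 2 - 1 ∨ i = 2 + 1 then x 2 else 0)
              ((fun i => if i = 3 then x 3 else 0) +
                ((fun i => if i = 4 then x 4 else 0) + ((fun i => if i = 5 then x 5 else 0) + 0)))) +
        dotN (fun i => if i = 1 - 1 ∨ i = 1 + 1 then x 1 else 0)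
          ((fun i => if i = 2 then x 2 else 0) +
            ((fun i => if i = 3 then x 3 else 0) +
              ((fun i => if i = 4 then x 4 else 0) + ((fun i => if i = 5 then x 5 else 0) + 0))))) +
    dotN (fun i => if i = 0 - 1 ∨ i = 0 + 1 then x 0 else 0)
      ((fun i => if i = 1 then x 1 else 0) +
        ((fun i => if i = 2 then x 2 else 0) +
          ((fun i => if i = 3 then x 3 else 0) +
            ((fun i => if i = 4 then x 4 else 0) + ((fun i => if i = 5 then x 5 else 0) + 0)))))

lemma Sx_closed (x : ZMod 6 → ZMod 2) : Sx x = PP (Af x) (Bf x) (Nf x) := by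
  have h6 : Sx x = Sgen (0:ZMod 6) ^ (x 0).val * (Sgen 1 ^ (x 1).val * (Sgen 2 ^ (x 2).val *
      (Sgen 3 ^ (x 3).val * (Sgen 4 ^ (x 4).val * (Sgen 5 ^ (x 5).val * 1))))) := rfl
  rw [h6, show (1 : Matrix (ZMod 6 → ZMod 2) (ZMod 6 → ZMod 2) ℂ) = PP 0 0 0 from PP_one.symm]
  simp only [Sgen_pow]
  simp only [PP_mul]
  rfl

lemma Af_eq : ∀ x : ZMod 6 → ZMod 2, Af x = x := by decide

/-- edge-sum exponent in `C6vec` -/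
def qN (t : ZMod 6 → ZMod 2) : ℕ := ∑ j : ZMod 6, (t j).val * (t (j + 1)).val

def qZ (t : ZMod 6 → ZMod 2) : ZMod 2 := ∑ j : ZMod 6, t j * t (j + 1)

lemma valsum (f : ZMod 6 → ZMod 2) :
    (∑ i : ZMod 6, (f i).val) % 2 = (∑ i : ZMod 6, f i).val % 2 := by
  revert f; decide

lemma qN_mod (t : ZMod 6 → ZMod 2) : qN t % 2 = (qZ t).val % 2 := by
  have h : ∀ a b : ZMod 2, a.val * b.val = (a * b).val := by decide
  unfold qN qZ
  rw [Finset.sum_congr rfl (fun j _ => h (t j) (t (j + 1)))]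
  exact valsum _

lemma Nf_mod : ∀ x : ZMod 6 → ZMod 2, Nf x % 2 = (qZ x).val % 2 := by decide

lemma Bf_eq : ∀ x : ZMod 6 → ZMod 2, Bf x = fun i => x (i - 1) + x (i + 1) := by decide

lemma sum_six (f : ZMod 6 → ZMod 2) :
    (∑ i, f i) = f 0 + f 1 + f 2 + f 3 + f 4 + f 5 := by
  show (∑ i : Fin 6, f i) = _
  exact Fin.sum_univ_six f

lemma zmod2_add_val : ∀ a b : ZMod 2, (a + b).val % 2 = (a.val + b.val) % 2 := by decide

lemma key_parity (u v : ZMod 6 → ZMod 2) :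
    (Nf (u + v) + dotN (Bf (u + v)) u) % 2 = (qN u + qN v) % 2 := by
  have hD : dotN (Bf (u + v)) u % 2
      = (∑ i : ZMod 6, ((u + v) (i - 1) + (u + v) (i + 1)) * u i).val % 2 := by
    rw [Bf_eq]
    exact valsum (fun i => ((u + v) (i - 1) + (u + v) (i + 1)) * u i)
  have hZ : qZ (u + v) + (∑ i : ZMod 6, ((u + v) (i - 1) + (u + v) (i + 1)) * u i)
      = qZ u + qZ v := by
    have h2 : (2 : ZMod 2) = 0 := by decide
    simp only [qZ, sum_six, Pi.add_apply]
    have e0 : ((0:ZMod 6) - 1) = 5 := by decide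
    have e1 : ((1:ZMod 6) - 1) = 0 := by decide
    have e2 : ((2:ZMod 6) - 1) = 1 := by decide
    have e3 : ((3:ZMod 6) - 1) = 2 := by decide
    have e4 : ((4:ZMod 6) - 1) = 3 := by decide
    have e5 : ((5:ZMod 6) - 1) = 4 := by decide
    have f0 : ((0:ZMod 6) + 1) = 1 := by decide
    have f1 : ((1:ZMod 6) + 1) = 2 := by decide
    have f2 : ((2:ZMod 6) + 1) = 3 := by decide
    have f3 : ((3:ZMod 6) + 1) = 4 := by decide
    have f4 : ((4:ZMod 6) + 1) = 5 := by decide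
    have f5 : ((5:ZMod 6) + 1) = 0 := by decide
    rw [e0, e1, e2, e3, e4, e5, f0, f1, f2, f3, f4, f5]
    linear_combination (u 0 * u 1 + u 1 * u 2 + u 2 * u 3 + u 3 * u 4 + u 4 * u 5 + u 5 * u 0
      + u 0 * v 1 + u 1 * v 2 + u 2 * v 3 + u 3 * v 4 + u 4 * v 5 + u 5 * v 0
      + v 0 * u 1 + v 1 * u 2 + v 2 * u 3 + v 3 * u 4 + v 4 * u 5 + v 5 * u 0) * h2
  have h1 := Nf_mod (u + v)
  have h2 := qN_mod u
  have h3 := qN_mod v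
  have h4 := zmod2_add_val (qZ (u + v))
      (∑ i : ZMod 6, ((u + v) (i - 1) + (u + v) (i + 1)) * u i)
  have h5 := zmod2_add_val (qZ u) (qZ v)
  rw [hZ] at h4
  omega

lemma C6vec_eq (t : ZMod 6 → ZMod 2) :
    C6vec t = (-1 : ℂ) ^ qN t * ((Real.sqrt 2 : ℂ))⁻¹ ^ 6 := by
  rw [C6vec, Finset.prod_pow_eq_pow_sum]; rfl

lemma star_C6vec (t : ZMod 6 → ZMod 2) : star (C6vec t) = C6vec t := by
  rw [C6vec_eq, star_mul', star_pow, star_neg, star_one, star_pow, star_inv₀]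
  congr 2
  rw [Complex.star_def, Complex.conj_ofReal]

lemma c6_norm : (64 : ℂ) * (((Real.sqrt 2 : ℂ))⁻¹ ^ 6 * ((Real.sqrt 2 : ℂ))⁻¹ ^ 6) = 1 := by
  have h2 : ((Real.sqrt 2 : ℝ) : ℂ) ^ 2 = 2 := by
    norm_cast
    rw [Real.sq_sqrt (by norm_num : (0:ℝ) ≤ 2)]
  have hs : ((Real.sqrt 2 : ℝ) : ℂ) ^ 12 = 64 := by
    rw [show (12 : ℕ) = 2 * 6 from rfl, pow_mul, h2]
    norm_num
  rw [← pow_add, inv_pow, hs]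
  norm_num

lemma add_self_fun (w : ZMod 6 → ZMod 2) : w + w = 0 := by
  funext i
  show w i + w i = 0
  revert i
  intro i
  have : ∀ a : ZMod 2, a + a = 0 := by decide
  exact this (w i)

lemma sum_Sx (v u : ZMod 6 → ZMod 2) :
    ∑ x : ZMod 6 → ZMod 2, Sx x v u = 64 * star (C6vec u) * C6vec v := by
  have hentry : ∀ x : ZMod 6 → ZMod 2,
      Sx x v u = if v = u + x then (-1 : ℂ) ^ (Nf x + dotN (Bf x) u) else 0 := by
    intro x
    rw [Sx_closed, Af_eq x]
    rfl
  rw [Finset.sum_congr rfl (fun x _ => hentry x), Finset.sum_eq_single (u + v)]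
  · rw [if_pos (by rw [← add_assoc, add_self_fun, zero_add])]
    rw [star_C6vec, C6vec_eq, C6vec_eq]
    rw [show (64 : ℂ) * ((-1 : ℂ) ^ qN u * ((Real.sqrt 2 : ℂ))⁻¹ ^ 6)
        * ((-1 : ℂ) ^ qN v * ((Real.sqrt 2 : ℂ))⁻¹ ^ 6)
        = ((-1 : ℂ) ^ qN u * (-1 : ℂ) ^ qN v)
          * ((64 : ℂ) * (((Real.sqrt 2 : ℂ))⁻¹ ^ 6 * ((Real.sqrt 2 : ℂ))⁻¹ ^ 6)) by ring]
    rw [c6_norm, mul_one, ← pow_add]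
    exact neg_one_pow_congr_mod2 (key_parity u v)
  · intro x _ hx
    rw [if_neg]
    intro h
    apply hx
    rw [h, ← add_assoc, add_self_fun, zero_add]
  · intro h; exact absurd (Finset.mem_univ _) h

lemma trace_sum (ρ : Matrix (ZMod 6 → ZMod 2) (ZMod 6 → ZMod 2) ℂ) :
    ∑ x : ZMod 6 → ZMod 2, (ρ * Sx x).trace
      = 64 * ∑ s, star (C6vec s) * (ρ.mulVec C6vec) s := by
  have h1 : ∀ x, (ρ * Sx x).trace = ∑ a, ∑ b, ρ a b * Sx x b a := by
    intro x
    simp [Matrix.trace, Matrix.diag, Matrix.mul_apply]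
  calc ∑ x : ZMod 6 → ZMod 2, (ρ * Sx x).trace
      = ∑ x : ZMod 6 → ZMod 2, ∑ a, ∑ b, ρ a b * Sx x b a :=
        Finset.sum_congr rfl fun x _ => h1 x
    _ = ∑ a, ∑ x : ZMod 6 → ZMod 2, ∑ b, ρ a b * Sx x b a := Finset.sum_comm
    _ = ∑ a, ∑ b, ∑ x : ZMod 6 → ZMod 2, ρ a b * Sx x b a :=
        Finset.sum_congr rfl fun a _ => Finset.sum_comm
    _ = ∑ a, ∑ b, ρ a b * (64 * star (C6vec a) * C6vec b) := by
        refine Finset.sum_congr rfl fun a _ => Finset.sum_congr rfl fun b _ => ?_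
        rw [← Finset.mul_sum, sum_Sx b a]
    _ = 64 * ∑ a, star (C6vec a) * ∑ b, ρ a b * C6vec b := by
        rw [Finset.mul_sum]
        refine Finset.sum_congr rfl fun a _ => ?_
        rw [Finset.mul_sum, Finset.mul_sum]
        exact Finset.sum_congr rfl fun b _ => by ring
    _ = 64 * ∑ s, star (C6vec s) * (ρ.mulVec C6vec) s := rfl

/-- Playing the cubic Boolean function game with the quantum strategy on state `ρ`:
the average success probability is `Pr_Q[win] = (1/64) Σ_x (1 + tr(ρ S_x))/2`, and
hence the fidelity satisfies `F(ρ, |C₆⟩) = 2 Pr_Q[win] - 1`. -/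
theorem cbf_win_probability_and_fidelity
    (ρ : Matrix (ZMod 6 → ZMod 2) (ZMod 6 → ZMod 2) ℂ)
    (hρ : ρ.PosSemidef) (htr : ρ.trace = 1)
    (p : (ZMod 6 → ZMod 2) → ℝ)
    (hp : ∀ x, p x = (1 + ((ρ * Sx x).trace).re) / 2)
    (PrQ : ℝ) (hPrQ : PrQ = (1 / 64) * ∑ x : ZMod 6 → ZMod 2, p x)
    (F : ℝ) (hF : F = (∑ s, star (C6vec s) * (ρ.mulVec C6vec) s).re) :
    PrQ = (1 / 64) * ∑ x : ZMod 6 → ZMod 2, (1 + ((ρ * Sx x).trace).re) / 2 ∧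
    F = 2 * PrQ - 1 := by
  have hre : ∑ x : ZMod 6 → ZMod 2, ((ρ * Sx x).trace).re
      = 64 * (∑ s, star (C6vec s) * (ρ.mulVec C6vec) s).re := by
    have h := congrArg Complex.re (trace_sum ρ)
    rw [Complex.re_sum] at h
    rw [h]
    simp [Complex.mul_re]
  have hcard : (Finset.univ : Finset (ZMod 6 → ZMod 2)).card = 64 := by decide
  have hsum : ∑ x : ZMod 6 → ZMod 2, p x
      = 32 + (∑ x : ZMod 6 → ZMod 2, ((ρ * Sx x).trace).re) / 2 := by
    rw [Finset.sum_congr rfl fun x _ => hp x]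
    rw [Finset.sum_congr rfl fun x _ =>
      (by ring : (1 + ((ρ * Sx x).trace).re) / 2 = 1/2 + ((ρ * Sx x).trace).re / 2)]
    rw [Finset.sum_add_distrib, Finset.sum_const, hcard, ← Finset.sum_div]
    norm_num
  constructor
  · rw [hPrQ]
    exact congrArg _ (Finset.sum_congr rfl fun x _ => hp x)
  · rw [hF, hPrQ, hsum]
    rw [show (∑ s, star (C6vec s) * (ρ.mulVec C6vec) s).re
        = (∑ x : ZMod 6 → ZMod 2, ((ρ * Sx x).trace).re) / 64 by rw [hre]; ring]
    ring
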